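/- arXiv:2403.19209 — 2 statements merged into one kernel-verified Lean document; each statement's English description precedes it below -/
import Mathlib

section
/- Let $1\le s<2$, $p>s$ with $p>1$, let $l$ be slowly varying at infinity, and let $r>\max\Big\{2,\,p,\,\frac{p/s-1}{1/s-1/2},\,\frac{p/s-1}{p/2-1/2},\,\frac{p/s-1}{1/2}\Big\}$. Let $Z$ be a nonnegative random variable on a probability space with $\mathbb{E}\big[Z^{\min\{2,p\}}\big]<\infty$. Then $\sum_{n=1}^{\infty}n^{r/2+p/s-2-1/s}\,l(n)\int_{n^{1/s}}^{\infty}x^{-r}\,\big(\mathbb{E}\big[\min(Z,x)^{2}\big]\big)^{r/2}\,dx<\infty$. -/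
open MeasureTheory Filter
open Set

private lemma steinhaus_inter {A B : Set ℝ} (hA : MeasurableSet A) (hB : MeasurableSet B)
    (hAs : A ⊆ Icc 0 4) (hBs : B ⊆ Icc 0 4)
    (h : volume (Icc (0:ℝ) 4) < volume A + volume B) : (A ∩ B).Nonempty := by
  rw [Set.nonempty_iff_ne_empty]
  intro hcon
  have hdisj : Disjoint A B := Set.disjoint_iff_inter_eq_empty.mpr hcon
  have h1 : volume (A ∪ B) = volume A + volume B := measure_union hdisj hB
  have h2 : volume (A ∪ B) ≤ volume (Icc (0:ℝ) 4) :=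
    measure_mono (Set.union_subset hAs hBs)
  rw [h1] at h2
  exact absurd (lt_of_lt_of_le h h2) (lt_irrefl _)

private lemma uct {f : ℝ → ℝ} (hf : Measurable f)
    (h : ∀ t : ℝ, Tendsto (fun u => f (u + t) - f u) atTop (nhds 0)) {ε : ℝ} (hε : 0 < ε) :
    ∃ U : ℝ, ∀ u, U ≤ u → ∀ t ∈ Icc (0:ℝ) 1, |f (u + t) - f u| ≤ ε := by
  by_contra hcon
  push_neg at hcon
  -- extract sequences
  choose x hx t ht hbig using hcon
  set y : ℕ → ℝ := fun n => x n with hy_def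
  set τ : ℕ → ℝ := fun n => t n with hτ_def
  have hy : Tendsto y atTop atTop :=
    tendsto_atTop_mono (fun n => hx (n : ℝ)) tendsto_natCast_atTop_atTop
  have hτ0 : ∀ n, 0 ≤ τ n := fun n => (ht (n:ℝ)).1
  have hτ1 : ∀ n, τ n ≤ 1 := fun n => (ht (n:ℝ)).2
  have hyτ : Tendsto (fun n => y n + τ n) atTop atTop :=
    tendsto_atTop_mono (fun n => le_add_of_nonneg_right (hτ0 n)) hy
  set F : ℕ → ℝ → ℝ := fun n t0 => f (y n + t0) - f (y n) with hF_def
  set F' : ℕ → ℝ → ℝ := fun n t0 => f (y n + τ n + t0) - f (y n + τ n) with hF'_def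
  have hFmeas : ∀ n, StronglyMeasurable (F n) := by
    intro n
    exact ((hf.comp (measurable_const.add measurable_id)).sub measurable_const).stronglyMeasurable
  have hF'meas : ∀ n, StronglyMeasurable (F' n) := by
    intro n
    exact ((hf.comp (measurable_const.add measurable_id)).sub measurable_const).stronglyMeasurable
  have hFconv : ∀ t0 : ℝ, Tendsto (fun n => F n t0) atTop (nhds 0) := fun t0 => (h t0).comp hy
  have hF'conv : ∀ t0 : ℝ, Tendsto (fun n => F' n t0) atTop (nhds 0) := fun t0 => (h t0).comp hyτ
  have hvol : volume (Icc (0:ℝ) 3) ≠ ⊤ := by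
    rw [Real.volume_Icc]; exact ENNReal.ofReal_ne_top
  obtain ⟨T, hTs, hTm, hTμ, hTu⟩ :=
    tendstoUniformlyOn_of_ae_tendsto hFmeas stronglyMeasurable_const measurableSet_Icc hvol
      (ae_of_all _ (fun t0 _ => hFconv t0)) (by norm_num : (0:ℝ) < 1/4)
  obtain ⟨T', hT's, hT'm, hT'μ, hT'u⟩ :=
    tendstoUniformlyOn_of_ae_tendsto hF'meas stronglyMeasurable_const measurableSet_Icc hvol
      (ae_of_all _ (fun t0 _ => hF'conv t0)) (by norm_num : (0:ℝ) < 1/4)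
  set S : Set ℝ := Icc 0 3 \ T with hS_def
  set S' : Set ℝ := Icc 0 3 \ T' with hS'_def
  have hSm : MeasurableSet S := measurableSet_Icc.diff hTm
  have hS'm : MeasurableSet S' := measurableSet_Icc.diff hT'm
  have hSvol : ENNReal.ofReal (11/4) ≤ volume S := by
    rw [hS_def, measure_diff hTs hTm.nullMeasurableSet (ne_top_of_le_ne_top hvol (measure_mono hTs))]
    rw [Real.volume_Icc]
    calc ENNReal.ofReal (11/4) = ENNReal.ofReal (3 - 0) - ENNReal.ofReal (1/4) := by
          rw [← ENNReal.ofReal_sub _ (by norm_num)]; norm_num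
      _ ≤ ENNReal.ofReal (3 - 0) - volume T := by
          exact tsub_le_tsub_left hTμ _
  have hS'vol : ENNReal.ofReal (11/4) ≤ volume S' := by
    rw [hS'_def, measure_diff hT's hT'm.nullMeasurableSet
      (ne_top_of_le_ne_top hvol (measure_mono hT's))]
    rw [Real.volume_Icc]
    calc ENNReal.ofReal (11/4) = ENNReal.ofReal (3 - 0) - ENNReal.ofReal (1/4) := by
          rw [← ENNReal.ofReal_sub _ (by norm_num)]; norm_num
      _ ≤ ENNReal.ofReal (3 - 0) - volume T' := by
          exact tsub_le_tsub_left hT'μ _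
  -- get a common index where both are uniformly small
  rw [Metric.tendstoUniformlyOn_iff] at hTu hT'u
  obtain ⟨n, hn1, hn2⟩ := ((hTu (ε/2) (by linarith)).and (hT'u (ε/2) (by linarith))).exists
  -- Steinhaus: find τ0 ∈ S with τ0 - τ n ∈ S'
  set B : Set ℝ := (fun z => z + -(τ n)) ⁻¹' S' with hB_def
  have hBm : MeasurableSet B := hS'm.preimage (measurable_id.add_const _)
  have hBvol : volume B = volume S' := measure_preimage_add_right volume _ _
  have hBs : B ⊆ Icc 0 4 := by
    intro z hz
    have hz'' : z + -(τ n) ∈ Icc (0:ℝ) 3 := (Set.mem_preimage.mp hz).1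
    have h01 := hτ0 n
    have h11 := hτ1 n
    exact ⟨by linarith [hz''.1], by linarith [hz''.2]⟩
  have hSs : S ⊆ Icc 0 4 := fun z hz => ⟨hz.1.1, by linarith [hz.1.2]⟩
  have hlt : volume (Icc (0:ℝ) 4) < volume S + volume B := by
    rw [hBvol, Real.volume_Icc]
    calc ENNReal.ofReal (4 - 0) < ENNReal.ofReal (11/4) + ENNReal.ofReal (11/4) := by
          rw [← ENNReal.ofReal_add (by norm_num) (by norm_num)]
          exact ENNReal.ofReal_lt_ofReal_iff_of_nonneg (by norm_num) |>.mpr (by norm_num)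
      _ ≤ volume S + volume S' := add_le_add hSvol hS'vol
  obtain ⟨τ0, hτ0S, hτ0B⟩ := steinhaus_inter hSm hBm hSs hBs hlt
  have h1 : dist ((fun _ => (0:ℝ)) τ0) (F n τ0) < ε/2 := hn1 τ0 hτ0S
  have h2 : dist ((fun _ => (0:ℝ)) (τ0 + -(τ n))) (F' n (τ0 + -(τ n))) < ε/2 :=
    hn2 _ (Set.mem_preimage.mp hτ0B)
  simp only [Real.dist_eq, zero_sub, abs_neg, hF_def, hF'_def] at h1 h2
  have hkey : y n + τ n + (τ0 + -(τ n)) = y n + τ0 := by ring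
  rw [hkey] at h2
  have hbig' : ε < |f (y n + τ n) - f (y n)| := hbig (n : ℝ)
  have htri := abs_sub_le (f (y n + τ n)) (f (y n + τ0)) (f (y n))
  rw [abs_sub_comm (f (y n + τ n)) (f (y n + τ0))] at htri
  linarith

private lemma potter {l : ℝ → ℝ} (hlmeas : Measurable l) (hlpos : ∀ x, 0 ≤ x → 0 < l x)
    (hlslow : ∀ c : ℝ, 0 < c → Tendsto (fun x => l (c * x) / l x) atTop (nhds 1))
    {ε : ℝ} (hε : 0 < ε) :
    ∃ C, 0 < C ∧ ∃ X : ℝ, 1 ≤ X ∧ ∀ y, X ≤ y → l y ≤ C * y ^ ε := by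
  set f : ℝ → ℝ := fun u => Real.log (l (Real.exp u)) with hf_def
  have hfmeas : Measurable f := Real.measurable_log.comp (hlmeas.comp Real.measurable_exp)
  have hconv : ∀ t : ℝ, Tendsto (fun u => f (u + t) - f u) atTop (nhds 0) := by
    intro t
    have h1 : Tendsto (fun u : ℝ => l (Real.exp t * Real.exp u) / l (Real.exp u)) atTop
        (nhds 1) := (hlslow (Real.exp t) (Real.exp_pos t)).comp Real.tendsto_exp_atTop
    have h2 : Tendsto (fun u : ℝ =>
        Real.log (l (Real.exp t * Real.exp u) / l (Real.exp u))) atTop (nhds 0) := by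
      have := ((Real.continuousAt_log one_ne_zero).tendsto).comp h1
      rwa [Real.log_one] at this
    refine h2.congr fun u => ?_
    rw [Real.log_div (hlpos _ (by positivity)).ne' (hlpos _ (Real.exp_pos u).le).ne']
    rw [hf_def]
    simp only []
    rw [Real.exp_add, mul_comm]
  obtain ⟨U, hU⟩ := uct hfmeas hconv hε
  -- chaining
  have chain : ∀ k : ℕ, ∀ θ ∈ Icc (0:ℝ) 1, f (U + k + θ) ≤ f U + ε * (k + 1) := by
    intro k
    induction k with
    | zero =>
        intro θ hθ
        have := hU U le_rfl θ hθ
        have h1 : f (U + θ) - f U ≤ ε := (abs_le.mp this).2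
        push_cast
        simp only [add_zero]
        linarith [h1]
    | succ k ih =>
        intro θ hθ
        have hbase : U ≤ U + k + θ := by
          have h1 := hθ.1
          have h2 : (0:ℝ) ≤ (k:ℝ) := Nat.cast_nonneg k
          linarith
        have h1 := hU (U + k + θ) hbase 1 ⟨zero_le_one, le_rfl⟩
        have h2 : f (U + k + θ + 1) - f (U + k + θ) ≤ ε := (abs_le.mp h1).2
        have h3 : U + ((k:ℕ)+1 : ℕ) + θ = U + k + θ + 1 := by push_cast; ring
        rw [h3]
        have h4 := ih θ hθ
        push_cast
        linarith
  have main : ∀ u, U ≤ u → f u ≤ f U + ε * (u - U + 1) := by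
    intro u hu
    set m : ℕ := ⌊u - U⌋₊ with hm_def
    have hm0 : (m:ℝ) ≤ u - U := Nat.floor_le (by linarith)
    have hm1 : u - U < m + 1 := Nat.lt_floor_add_one _
    set θ : ℝ := u - U - m with hθ_def
    have hθmem : θ ∈ Icc (0:ℝ) 1 := ⟨by simp only [hθ_def]; linarith, by simp only [hθ_def]; linarith⟩
    have heq : u = U + m + θ := by rw [hθ_def]; ring
    rw [heq]
    have := chain m θ hθmem
    nlinarith [mul_nonneg hε.le hθmem.1]
  refine ⟨Real.exp (f U + ε * (1 - U)), Real.exp_pos _, max 1 (Real.exp U), le_max_left _ _, ?_⟩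
  intro y hy
  have hy1 : (1:ℝ) ≤ y := le_trans (le_max_left _ _) hy
  have hy0 : (0:ℝ) < y := lt_of_lt_of_le one_pos hy1
  have hyU : U ≤ Real.log y := by
    rw [Real.le_log_iff_exp_le hy0]
    exact le_trans (le_max_right _ _) hy
  have hly : l y = Real.exp (f (Real.log y)) := by
    rw [hf_def]
    simp only []
    rw [Real.exp_log hy0, Real.exp_log (hlpos y hy0.le)]
  rw [hly]
  have h5 := main (Real.log y) hyU
  calc Real.exp (f (Real.log y)) ≤ Real.exp (f U + ε * (Real.log y - U + 1)) :=
        Real.exp_le_exp.mpr h5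
    _ = Real.exp (f U + ε * (1 - U)) * y ^ ε := by
        rw [Real.rpow_def_of_pos hy0, ← Real.exp_add]
        ring_nf


set_option maxHeartbeats 2000000 in
/-- **Bound for the second-moment Rosenthal term I₂₂ in the proof of Theorem 3.1.**
If `1 ≤ s < 2`, `p > s`, `p > 1`, `l` is slowly varying at infinity,
`r > max{2, p, (p/s-1)/(1/s-1/2), (p/s-1)/(p/2-1/2), (p/s-1)/(1/2)}`, and `Z ≥ 0`
satisfies `E[Z^{min{2,p}}] < ∞`, then
`∑ n^{r/2+p/s-2-1/s} l(n) ∫_{n^{1/s}}^∞ x^{-r} (E[min(Z, x)²])^{r/2} dx < ∞`. -/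
theorem second_moment_rosenthal_term_bound
    {Ω : Type*} [MeasurableSpace Ω] (μ : Measure Ω) [IsProbabilityMeasure μ]
    (Z : Ω → ℝ) (hZmeas : Measurable Z) (hZnonneg : ∀ ω, 0 ≤ Z ω)
    (s p r : ℝ) (hs1 : 1 ≤ s) (hs2 : s < 2) (hsp : s < p) (hp1 : 1 < p)
    (hr : max (max 2 p)
        (max ((p / s - 1) / (1 / s - 1 / 2))
          (max ((p / s - 1) / (p / 2 - 1 / 2)) ((p / s - 1) / (1 / 2)))) < r)
    (l : ℝ → ℝ) (hlmeas : Measurable l) (hlpos : ∀ x, 0 ≤ x → 0 < l x)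
    (hlslow : ∀ c : ℝ, 0 < c → Tendsto (fun x => l (c * x) / l x) atTop (nhds 1))
    (hmom : Integrable (fun ω => Z ω ^ min 2 p) μ) :
    Summable (fun n : ℕ =>
      ((n + 1 : ℝ) ^ (r / 2 + p / s - 2 - 1 / s)) * l (n + 1) *
        ∫ x in Set.Ioi ((n + 1 : ℝ) ^ (1 / s)),
          x ^ (-r) * (∫ ω, (min (Z ω) x) ^ 2 ∂μ) ^ (r / 2)) := by
  have hs0 : (0:ℝ) < s := lt_of_lt_of_le one_pos hs1
  have h2r : 2 < r := lt_of_le_of_lt ((le_max_left 2 p).trans (le_max_left _ _)) hr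
  have hr3 : (p / s - 1) / (1 / s - 1 / 2) < r :=
    lt_of_le_of_lt ((le_max_left _ _).trans (le_max_right _ _)) hr
  set q : ℝ := min 2 p with hq_def
  have hq1 : 1 < q := lt_min one_lt_two hp1
  have hq2 : q ≤ 2 := min_le_left _ _
  have hq0 : 0 < q := by linarith
  have hqr : 2 < q * r := by nlinarith
  set e : ℝ := -(q * r / 2) with he_def
  have he : e < -1 := by rw [he_def]; linarith
  set c0 : ℝ := r / 2 + p / s - 2 - 1 / s with hc0_def
  set d : ℝ := (1 / s) * (e + 1) with hd_def
  set E : ℝ := c0 + d with hE_def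
  have hE : E < -1 := by
    have hkey : E = (r * s / 2 + p - 2 * s - q * r / 2) * (1 / s) := by
      rw [hE_def, hc0_def, hd_def, he_def]; field_simp; ring
    rw [hkey, mul_one_div, div_lt_iff₀ hs0]
    rcases le_or_gt 2 p with hp2 | hp2
    · have hqeq : q = 2 := min_eq_left hp2
      have h2s : (0:ℝ) < 2 - s := by linarith
      have hhalf : (0:ℝ) < 1 / s - 1 / 2 := by
        have := one_div_lt_one_div_of_lt hs0 hs2
        linarith
      have hconv : (p / s - 1) / (1 / s - 1 / 2) = 2 * (p - s) / (2 - s) := by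
        rw [div_eq_div_iff hhalf.ne' h2s.ne']
        field_simp
      rw [hconv] at hr3
      rw [div_lt_iff₀ h2s] at hr3
      rw [hqeq]
      linarith
    · have hqeq : q = p := min_eq_right hp2.le
      rw [hqeq]
      nlinarith [mul_pos (sub_pos.mpr hsp) (by linarith : (0:ℝ) < r / 2 - 1)]
  set Cq : ℝ := ∫ ω, Z ω ^ q ∂μ with hCq_def
  have hCq0 : 0 ≤ Cq := integral_nonneg fun ω => Real.rpow_nonneg (hZnonneg ω) _
  set K : ℝ := Cq ^ (r / 2) with hK_def
  have hK0 : 0 ≤ K := Real.rpow_nonneg hCq0 _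
  set D : ℝ := q * r / 2 - 1 with hD_def
  have hD0 : 0 < D := by rw [hD_def]; linarith
  have hMnn : ∀ x : ℝ, 0 ≤ ∫ ω, (min (Z ω) x) ^ 2 ∂μ := fun x =>
    integral_nonneg fun ω => sq_nonneg _
  have hM : ∀ x : ℝ, 0 < x → (∫ ω, (min (Z ω) x) ^ 2 ∂μ) ≤ Cq * x ^ (2 - q) := by
    intro x hx
    have hle : ∀ ω, (min (Z ω) x) ^ 2 ≤ Z ω ^ q * x ^ (2 - q) := by
      intro ω
      set m := min (Z ω) x with hm_def
      have hm0 : 0 ≤ m := le_min (hZnonneg ω) hx.le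
      have h2 : m ^ (2:ℕ) = m ^ q * m ^ (2 - q) := by
        rw [← Real.rpow_add_of_nonneg hm0 hq0.le (by linarith : (0:ℝ) ≤ 2 - q)]
        have hq2' : q + (2 - q) = ((2:ℕ):ℝ) := by push_cast; ring
        rw [hq2', Real.rpow_natCast]
      rw [h2]
      exact mul_le_mul (Real.rpow_le_rpow hm0 (min_le_left _ _) hq0.le)
        (Real.rpow_le_rpow hm0 (min_le_right _ _) (by linarith))
        (Real.rpow_nonneg hm0 _) (Real.rpow_nonneg (hZnonneg ω) _)
    calc (∫ ω, (min (Z ω) x) ^ 2 ∂μ) ≤ ∫ ω, Z ω ^ q * x ^ (2 - q) ∂μ :=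
          integral_mono_of_nonneg (ae_of_all _ fun ω => sq_nonneg _)
            (hmom.mul_const _) (ae_of_all _ hle)
      _ = Cq * x ^ (2 - q) := integral_mul_const _ _
  have hIbound : ∀ a : ℝ, 1 ≤ a →
      (∫ x in Set.Ioi a, x ^ (-r) * (∫ ω, (min (Z ω) x) ^ 2 ∂μ) ^ (r / 2))
        ≤ K * a ^ (e + 1) / D := by
    intro a ha
    have ha0 : (0:ℝ) < a := lt_of_lt_of_le one_pos ha
    have hgint : IntegrableOn (fun x : ℝ => K * x ^ e) (Set.Ioi a) :=
      (integrableOn_Ioi_rpow_of_lt he ha0).const_mul K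
    have hptwise : ∀ x ∈ Set.Ioi a,
        x ^ (-r) * (∫ ω, (min (Z ω) x) ^ 2 ∂μ) ^ (r / 2) ≤ K * x ^ e := by
      intro x hx
      have hx0 : (0:ℝ) < x := lt_trans ha0 hx
      have h1 : (∫ ω, (min (Z ω) x) ^ 2 ∂μ) ^ (r / 2) ≤ (Cq * x ^ (2 - q)) ^ (r / 2) :=
        Real.rpow_le_rpow (hMnn x) (hM x hx0) (by linarith)
      have h2 : (Cq * x ^ (2 - q)) ^ (r / 2) = K * x ^ ((2 - q) * (r / 2)) := by
        rw [Real.mul_rpow hCq0 (Real.rpow_nonneg hx0.le _), ← Real.rpow_mul hx0.le]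
      calc x ^ (-r) * (∫ ω, (min (Z ω) x) ^ 2 ∂μ) ^ (r / 2)
          ≤ x ^ (-r) * (K * x ^ ((2 - q) * (r / 2))) := by
            rw [← h2]
            exact mul_le_mul_of_nonneg_left h1 (Real.rpow_nonneg hx0.le _)
        _ = K * x ^ e := by
            rw [mul_comm K, ← mul_assoc, ← Real.rpow_add hx0, mul_comm]
            congr 1
            rw [he_def]; ring
    have hnn : ∀ x ∈ Set.Ioi a, 0 ≤ x ^ (-r) * (∫ ω, (min (Z ω) x) ^ 2 ∂μ) ^ (r / 2) := by
      intro x hx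
      have hx0 : (0:ℝ) < x := lt_trans ha0 hx
      exact mul_nonneg (Real.rpow_nonneg hx0.le _) (Real.rpow_nonneg (hMnn x) _)
    calc (∫ x in Set.Ioi a, x ^ (-r) * (∫ ω, (min (Z ω) x) ^ 2 ∂μ) ^ (r / 2))
        ≤ ∫ x in Set.Ioi a, K * x ^ e := by
          refine integral_mono_of_nonneg ?_ hgint ?_
          · exact (ae_restrict_iff' measurableSet_Ioi).mpr (ae_of_all _ hnn)
          · exact (ae_restrict_iff' measurableSet_Ioi).mpr (ae_of_all _ hptwise)
      _ = K * a ^ (e + 1) / D := by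
          rw [integral_const_mul, integral_Ioi_rpow_of_lt he ha0]
          have hDne : D = -(e + 1) := by rw [hD_def, he_def]; ring
          have hene : e + 1 ≠ 0 := ne_of_lt (by linarith : e + 1 < 0)
          rw [hDne]
          field_simp
  have hεE : (0:ℝ) < (-1 - E) / 2 := by linarith
  obtain ⟨C, hC0, X, hX1, hP⟩ := potter hlmeas hlpos hlslow hεE
  set ε' : ℝ := (-1 - E) / 2 with hε'_def
  set t : ℝ := E + ε' with ht_def
  have ht : t < -1 := by rw [ht_def, hε'_def]; linarith
  set B : ℝ := C * (K / D) with hB_def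
  have hbound : ∀ n : ℕ, X ≤ (n : ℝ) + 1 →
      ((n + 1 : ℝ) ^ c0) * l (n + 1) *
        (∫ x in Set.Ioi ((n + 1 : ℝ) ^ (1 / s)),
          x ^ (-r) * (∫ ω, (min (Z ω) x) ^ 2 ∂μ) ^ (r / 2)) ≤ B * ((n : ℝ) + 1) ^ t := by
    intro n hXn
    have hn0 : (0:ℝ) < (n : ℝ) + 1 := by positivity
    have ha1 : (1:ℝ) ≤ ((n : ℝ) + 1) ^ (1 / s) := by
      calc (1:ℝ) = (1:ℝ) ^ (1 / s) := (Real.one_rpow _).symm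
        _ ≤ ((n : ℝ) + 1) ^ (1 / s) :=
            Real.rpow_le_rpow (zero_le_one : (0:ℝ) ≤ 1) (by linarith [(Nat.cast_nonneg n : (0:ℝ) ≤ (n:ℝ))]) (by positivity)
    have hIb := hIbound _ ha1
    have haE : (((n : ℝ) + 1) ^ (1 / s)) ^ (e + 1) = ((n : ℝ) + 1) ^ d := by
      rw [← Real.rpow_mul hn0.le, hd_def]
    rw [haE] at hIb
    have hl0 : (0:ℝ) < l ((n : ℝ) + 1) := hlpos _ (by positivity)
    have hA0 : (0:ℝ) < ((n : ℝ) + 1) ^ c0 := Real.rpow_pos_of_pos hn0 _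
    have hPn : l ((n : ℝ) + 1) ≤ C * ((n : ℝ) + 1) ^ ε' := hP _ hXn
    have hpow : ((n : ℝ) + 1) ^ c0 * ((n : ℝ) + 1) ^ ε' * ((n : ℝ) + 1) ^ d
        = ((n : ℝ) + 1) ^ t := by
      rw [← Real.rpow_add hn0, ← Real.rpow_add hn0, ht_def, hE_def]
      congr 1
      ring
    calc ((n + 1 : ℝ) ^ c0) * l (n + 1) *
          (∫ x in Set.Ioi ((n + 1 : ℝ) ^ (1 / s)),
            x ^ (-r) * (∫ ω, (min (Z ω) x) ^ 2 ∂μ) ^ (r / 2))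
        ≤ ((n + 1 : ℝ) ^ c0) * l (n + 1) * (K * ((n : ℝ) + 1) ^ d / D) :=
          mul_le_mul_of_nonneg_left hIb (mul_nonneg hA0.le hl0.le)
      _ ≤ ((n + 1 : ℝ) ^ c0) * (C * ((n : ℝ) + 1) ^ ε') * (K * ((n : ℝ) + 1) ^ d / D) := by
          apply mul_le_mul_of_nonneg_right _
            (div_nonneg (mul_nonneg hK0 (Real.rpow_nonneg hn0.le _)) hD0.le)
          exact mul_le_mul_of_nonneg_left hPn hA0.le
      _ = B * ((n : ℝ) + 1) ^ t := by
          rw [← hpow, hB_def]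
          field_simp
  have hnonneg : ∀ n : ℕ, 0 ≤ ((n + 1 : ℝ) ^ c0) * l (n + 1) *
      ∫ x in Set.Ioi ((n + 1 : ℝ) ^ (1 / s)),
        x ^ (-r) * (∫ ω, (min (Z ω) x) ^ 2 ∂μ) ^ (r / 2) := by
    intro n
    have hn0 : (0:ℝ) < (n : ℝ) + 1 := by positivity
    have ha0 : (0:ℝ) < ((n : ℝ) + 1) ^ (1 / s) := Real.rpow_pos_of_pos hn0 _
    refine mul_nonneg (mul_nonneg (Real.rpow_pos_of_pos hn0 _).le
      (hlpos _ (by positivity)).le) ?_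
    apply setIntegral_nonneg measurableSet_Ioi
    intro x hx
    have hx0 : (0:ℝ) < x := lt_trans ha0 hx
    exact mul_nonneg (Real.rpow_nonneg hx0.le _) (Real.rpow_nonneg (hMnn x) _)
  set N : ℕ := ⌈X⌉₊ with hN_def
  rw [← _root_.summable_nat_add_iff N]
  have hsum0 : Summable (fun n : ℕ => B * ((n : ℝ) + 1) ^ t) := by
    apply Summable.mul_left
    have h1 : Summable (fun n : ℕ => (n : ℝ) ^ t) := Real.summable_nat_rpow.mpr ht
    have h2 := (_root_.summable_nat_add_iff 1).mpr h1
    refine h2.congr fun n => ?_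
    push_cast
    ring_nf
  have hsumN : Summable (fun n : ℕ => B * ((↑(n + N) : ℝ) + 1) ^ t) :=
    (_root_.summable_nat_add_iff N).mpr hsum0
  apply Summable.of_nonneg_of_le (fun n => hnonneg (n + N)) _ hsumN
  intro n
  apply hbound
  have h1 : X ≤ (N : ℝ) := Nat.le_ceil X
  have h2 : (N : ℝ) ≤ ((n + N : ℕ) : ℝ) := by exact_mod_cast Nat.le_add_left N n
  linarith
end

section
/- Let $1\le s<2$, $p>s$ with $p>1$, let $l$ be slowly varying at infinity, and let $r>\max\Big\{2,\,p,\,\frac{p/s-1}{1/s-1/2},\,\frac{p/s-1}{p/2-1/2},\,\frac{p/s-1}{1/2}\Big\}$. Let $Y$ be a real random variable on a probability space with $\mathbb{E}\big[|Y|^{p}\big]<\infty$. Then $\sum_{n=1}^{\infty}n^{r+p/s-2-1/s}\,l(n)\int_{n^{1/s}}^{\infty}x^{-r}\,\big(\mathbb{E}\big[|Y|\,\mathbf{1}\{|Y|>x\}\big]\big)^{r}\,dx<\infty$. -/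
open MeasureTheory Filter

section Aux
open Set

lemma slow_unif (h : ℝ → ℝ) (hm : Measurable h)
    (hconv : ∀ u : ℝ, Tendsto (fun t => h (t + u) - h t) atTop (nhds 0))
    {ε : ℝ} (hε : 0 < ε) :
    ∃ T : ℝ, ∀ t ≥ T, ∀ u ∈ Set.Icc (0:ℝ) 1, |h (t + u) - h t| ≤ ε := by
  by_contra hcon
  push_neg at hcon
  choose t ht u hu hbig using fun k : ℕ => hcon k
  have ttend : Tendsto t atTop atTop :=
    tendsto_atTop_mono ht tendsto_natCast_atTop_atTop
  have t'tend : Tendsto (fun k => t k + u k) atTop atTop :=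
    tendsto_atTop_mono (fun k => by have := (hu k).1; linarith [ht k]) tendsto_natCast_atTop_atTop
  set F : ℕ → ℝ → ℝ := fun k v => h (t k + v) - h (t k) with hF
  set G : ℕ → ℝ → ℝ := fun k v => h (t k + u k + v) - h (t k + u k) with hG
  have hFm : ∀ k, StronglyMeasurable (F k) := fun k =>
    ((hm.comp (measurable_const.add measurable_id)).sub measurable_const).stronglyMeasurable
  have hGm : ∀ k, StronglyMeasurable (G k) := fun k =>
    ((hm.comp (measurable_const.add measurable_id)).sub measurable_const).stronglyMeasurable
  have hFconv : ∀ v : ℝ, Tendsto (fun k => F k v) atTop (nhds 0) := fun v =>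
    (hconv v).comp ttend
  have hGconv : ∀ v : ℝ, Tendsto (fun k => G k v) atTop (nhds 0) := fun v =>
    (hconv v).comp t'tend
  have hsm : MeasurableSet (Icc (0:ℝ) 2) := measurableSet_Icc
  have hsfin : volume (Icc (0:ℝ) 2) ≠ ⊤ := by
    rw [Real.volume_Icc]; exact ENNReal.ofReal_ne_top
  obtain ⟨A, hAs, hAm, hAle, hAunif⟩ := tendstoUniformlyOn_of_ae_tendsto (μ := volume)
    hFm stronglyMeasurable_const hsm hsfin
    (ae_of_all _ (fun v _ => hFconv v)) (by norm_num : (0:ℝ) < 1/8)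
  obtain ⟨B, hBs, hBm, hBle, hBunif⟩ := tendstoUniformlyOn_of_ae_tendsto (μ := volume)
    hGm stronglyMeasurable_const hsm hsfin
    (ae_of_all _ (fun v _ => hGconv v)) (by norm_num : (0:ℝ) < 1/8)
  set E : Set ℝ := Icc (0:ℝ) 2 \ (A ∪ B) with hEdef
  have hEm : MeasurableSet E := hsm.diff (hAm.union hBm)
  have hFu : TendstoUniformlyOn F (fun _ => 0) atTop E :=
    hAunif.mono (diff_subset_diff_right subset_union_left)
  have hGu : TendstoUniformlyOn G (fun _ => 0) atTop E :=
    hBunif.mono (diff_subset_diff_right subset_union_right)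
  have hE2 : ENNReal.ofReal 2 ≤ volume E + ENNReal.ofReal (1/4) := by
    have hsub : Icc (0:ℝ) 2 ⊆ E ∪ (A ∪ B) := fun x hx => by
      by_cases hab : x ∈ A ∪ B
      · exact Or.inr hab
      · exact Or.inl ⟨hx, hab⟩
    calc ENNReal.ofReal 2 = volume (Icc (0:ℝ) 2) := by rw [Real.volume_Icc]; norm_num
      _ ≤ volume (E ∪ (A ∪ B)) := measure_mono hsub
      _ ≤ volume E + volume (A ∪ B) := measure_union_le _ _
      _ ≤ volume E + (volume A + volume B) := by gcongr; exact measure_union_le _ _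
      _ ≤ volume E + (ENNReal.ofReal (1/8) + ENNReal.ofReal (1/8)) := by gcongr
      _ = volume E + ENNReal.ofReal (1/4) := by rw [← ENNReal.ofReal_add] <;> norm_num
  have hEsub : E ⊆ Icc (0:ℝ) 2 := diff_subset
  -- for each k, find w with w ∈ E and w + u k ∈ E
  have hwex : ∀ k : ℕ, ∃ w, w ∈ E ∧ w + u k ∈ E := by
    intro k
    set E' : Set ℝ := (fun x => x + u k) ⁻¹' E with hE'def
    have hE'm : MeasurableSet E' := hEm.preimage (measurable_id.add_const _)
    have hE'vol : volume E' = volume E := measure_preimage_add_right volume (u k) E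
    have hsub2 : E ∪ E' ⊆ Icc (-1:ℝ) 2 := by
      rintro x (hx | hx)
      · exact ⟨by linarith [(hEsub hx).1], (hEsub hx).2⟩
      · have hxe : x + u k ∈ Icc (0:ℝ) 2 := hEsub hx
        simp only [mem_Icc] at hxe
        have h1 := (hu k).1; have h2 := (hu k).2
        exact ⟨by linarith [hxe.1], by linarith [hxe.2]⟩
    have hEE' : volume (E ∩ E') ≠ 0 := by
      intro h0
      have h1 : volume (E ∪ E') = volume E + volume E' := by
        rw [← measure_union_add_inter E hE'm, h0, add_zero]
      have h2 : volume (E ∪ E') ≤ ENNReal.ofReal 3 := by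
        refine le_trans (measure_mono hsub2) ?_
        rw [Real.volume_Icc]; norm_num
      have h3 : ENNReal.ofReal 2 + ENNReal.ofReal 2 ≤
          volume E + volume E' + (ENNReal.ofReal (1/4) + ENNReal.ofReal (1/4)) := by
        rw [hE'vol]
        calc ENNReal.ofReal 2 + ENNReal.ofReal 2
            ≤ (volume E + ENNReal.ofReal (1/4)) + (volume E + ENNReal.ofReal (1/4)) :=
              add_le_add hE2 hE2
          _ = volume E + volume E + (ENNReal.ofReal (1/4) + ENNReal.ofReal (1/4)) := by ring
      rw [← h1] at h3
      have h4 : ENNReal.ofReal 2 + ENNReal.ofReal 2 ≤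
          ENNReal.ofReal 3 + (ENNReal.ofReal (1/4) + ENNReal.ofReal (1/4)) :=
        le_trans h3 (by gcongr)
      rw [← ENNReal.ofReal_add (by norm_num) (by norm_num),
        ← ENNReal.ofReal_add (by norm_num) (by norm_num),
        ← ENNReal.ofReal_add (by norm_num) (by norm_num)] at h4
      have := ENNReal.ofReal_le_ofReal_iff (by norm_num : (0:ℝ) ≤ 3 + (1/4+1/4)) |>.mp h4
      norm_num at this
    obtain ⟨w, hw⟩ := nonempty_of_measure_ne_zero hEE'
    exact ⟨w, hw.1, hw.2⟩
  choose w hwE hwuE using hwex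
  -- uniform smallness
  have hF2 := (Metric.tendstoUniformlyOn_iff.mp hFu) (ε/2) (by linarith)
  have hG2 := (Metric.tendstoUniformlyOn_iff.mp hGu) (ε/2) (by linarith)
  obtain ⟨k, hkF, hkG⟩ := (hF2.and hG2).exists
  have h1 : |F k (w k + u k)| < ε/2 := by
    have := hkF (w k + u k) (hwuE k)
    rwa [Real.dist_eq, zero_sub, abs_neg] at this
  have h2 : |G k (w k)| < ε/2 := by
    have := hkG (w k) (hwE k)
    rwa [Real.dist_eq, zero_sub, abs_neg] at this
  have key : h (t k + u k) - h (t k) = F k (w k + u k) - G k (w k) := by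
    simp only [hF, hG]
    have e1 : t k + (w k + u k) = t k + u k + w k := by ring
    rw [e1]; ring
  have := hbig k
  rw [key] at this
  have := abs_sub_abs_le_abs_sub (F k (w k + u k)) (G k (w k))
  have habs : |F k (w k + u k) - G k (w k)| ≤ |F k (w k + u k)| + |G k (w k)| :=
    abs_sub _ _
  linarith [hbig k, key ▸ hbig k]

lemma slow_growth (l : ℝ → ℝ) (hlmeas : Measurable l) (hlpos : ∀ x, 0 ≤ x → 0 < l x)
    (hlslow : ∀ c : ℝ, 0 < c → Tendsto (fun x => l (c * x) / l x) atTop (nhds 1))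
    {ε : ℝ} (hε : 0 < ε) :
    ∃ C > 0, ∃ X : ℝ, 1 ≤ X ∧ ∀ x, X ≤ x → l x ≤ C * x ^ ε := by
  set h : ℝ → ℝ := fun t => Real.log (l (Real.exp t)) with hhdef
  have hm : Measurable h :=
    Real.measurable_log.comp (hlmeas.comp Real.measurable_exp)
  have hpos : ∀ t : ℝ, 0 < l (Real.exp t) := fun t => hlpos _ (Real.exp_pos t).le
  have hconv : ∀ u : ℝ, Tendsto (fun t => h (t + u) - h t) atTop (nhds 0) := by
    intro u
    have base := (hlslow (Real.exp u) (Real.exp_pos u)).comp Real.tendsto_exp_atTop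
    have hlog : Tendsto (fun t => Real.log (l (Real.exp u * Real.exp t) / l (Real.exp t)))
        atTop (nhds 0) := by
      have hc : Tendsto Real.log (nhds (1:ℝ)) (nhds 0) := by
        have := (Real.continuousAt_log one_ne_zero).tendsto
        rwa [Real.log_one] at this
      exact hc.comp base
    refine hlog.congr (fun t => ?_)
    have hnum : l (Real.exp u * Real.exp t) ≠ 0 := (hlpos _ (by positivity)).ne'
    rw [Real.log_div hnum (hpos t).ne']
    congr 3
    rw [← Real.exp_add]
    ring_nf
  obtain ⟨T, hT⟩ := slow_unif h hm hconv hε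
  have step : ∀ t, T ≤ t → ∀ u ∈ Icc (0:ℝ) 1, h (t + u) ≤ h t + ε := by
    intro t ht u hu
    have := hT t ht u hu
    have := abs_le.mp this
    linarith [this.2]
  have claim : ∀ n : ℕ, ∀ t, T ≤ t → t ≤ T + n + 1 → h t ≤ h T + ε * (n + 1) := by
    intro n
    induction n with
    | zero =>
      intro t h1 h2
      have := step T le_rfl (t - T) ⟨by linarith, by push_cast at h2; linarith⟩
      rw [add_sub_cancel] at this
      push_cast
      linarith
    | succ n ih =>
      intro t h1 h2
      by_cases hc : t ≤ T + n + 1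
      · have := ih t h1 hc
        have hεn : ε * (↑n + 1) ≤ ε * (↑n + 1 + 1) := by nlinarith [hε.le]
        push_cast
        push_cast at this
        linarith
      · push_neg at hc
        have h1' : T ≤ t - 1 := by
          have : (0:ℝ) ≤ n := Nat.cast_nonneg n
          linarith
        have h2' : t - 1 ≤ T + n + 1 := by push_cast at h2; linarith
        have ihh := ih (t - 1) h1' h2'
        have hs := step (t - 1) h1' 1 ⟨zero_le_one, le_rfl⟩
        rw [sub_add_cancel] at hs
        push_cast
        push_cast at ihh
        linarith
  have hub : ∀ t, T ≤ t → h t ≤ h T + ε * (t - T + 2) := by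
    intro t ht
    set n : ℕ := ⌈t - T⌉₊ with hn
    have hn1 : t - T ≤ n := Nat.le_ceil _
    have hn2 : (n:ℝ) < t - T + 1 := Nat.ceil_lt_add_one (by linarith)
    have := claim n t ht (by linarith)
    have : h t ≤ h T + ε * (n + 1) := this
    nlinarith [hε.le]
  set C : ℝ := Real.exp (h T - ε * T + 2 * ε) with hC
  refine ⟨C, Real.exp_pos _, max 1 (Real.exp T), le_max_left _ _, ?_⟩
  intro x hx
  have hx1 : (1:ℝ) ≤ x := le_trans (le_max_left _ _) hx
  have hx0 : (0:ℝ) < x := by linarith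
  have hlogT : T ≤ Real.log x := by
    rw [Real.le_log_iff_exp_le hx0]
    exact le_trans (le_max_right _ _) hx
  have hlx : l x = Real.exp (h (Real.log x)) := by
    rw [hhdef]
    simp only []
    rw [Real.exp_log hx0, Real.exp_log (hlpos x hx0.le)]
  have hb := hub (Real.log x) hlogT
  rw [hlx]
  calc Real.exp (h (Real.log x)) ≤ Real.exp ((h T - ε * T + 2 * ε) + ε * Real.log x) := by
        apply Real.exp_le_exp.mpr; linarith
    _ = C * x ^ ε := by
        rw [Real.exp_add, Real.rpow_def_of_pos hx0, mul_comm (Real.log x) ε]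

end Aux


/-- **Bound for the centering term I₂₃ in the proof of Theorem 3.1.**
If `1 ≤ s < 2`, `p > s`, `p > 1`, `l` is slowly varying at infinity,
`r > max{2, p, (p/s-1)/(1/s-1/2), (p/s-1)/(p/2-1/2), (p/s-1)/(1/2)}`, and `Y`
satisfies `E[|Y|^p] < ∞`, then
`∑ n^{r+p/s-2-1/s} l(n) ∫_{n^{1/s}}^∞ x^{-r} (E[|Y| 1{|Y| > x}])^r dx < ∞`. -/
theorem centering_term_series_bound
    {Ω : Type*} [MeasurableSpace Ω] (μ : Measure Ω) [IsProbabilityMeasure μ]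
    (Y : Ω → ℝ) (hYmeas : Measurable Y)
    (s p r : ℝ) (hs1 : 1 ≤ s) (hs2 : s < 2) (hsp : s < p) (hp1 : 1 < p)
    (hr : max (max 2 p)
        (max ((p / s - 1) / (1 / s - 1 / 2))
          (max ((p / s - 1) / (p / 2 - 1 / 2)) ((p / s - 1) / (1 / 2)))) < r)
    (l : ℝ → ℝ) (hlmeas : Measurable l) (hlpos : ∀ x, 0 ≤ x → 0 < l x)
    (hlslow : ∀ c : ℝ, 0 < c → Tendsto (fun x => l (c * x) / l x) atTop (nhds 1))
    (hmom : Integrable (fun ω => |Y ω| ^ p) μ) :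
    Summable (fun n : ℕ =>
      ((n + 1 : ℝ) ^ (r + p / s - 2 - 1 / s)) * l (n + 1) *
        ∫ x in Set.Ioi ((n + 1 : ℝ) ^ (1 / s)),
          x ^ (-r) * (∫ ω in {ω | x < |Y ω|}, |Y ω| ∂μ) ^ r) := by
  classical
  have hs0 : (0:ℝ) < s := by linarith
  have hr2 : (2:ℝ) < r := lt_of_le_of_lt (le_max_of_le_left (le_max_left _ _)) hr
  have hr0 : (0:ℝ) < r := by linarith
  have hps : (1:ℝ) < p / s := (one_lt_div hs0).mpr hsp
  have hpr1 : (1:ℝ) < p * r := by nlinarith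
  set M := ∫ ω, |Y ω| ^ p ∂μ with hM
  have hM0 : 0 ≤ M := integral_nonneg fun ω => Real.rpow_nonneg (abs_nonneg _) _
  set T : ℝ → ℝ := fun x => ∫ ω in {ω | x < |Y ω|}, |Y ω| ∂μ with hTdef
  have hT0 : ∀ x, 0 ≤ T x := fun x => integral_nonneg fun ω => abs_nonneg _
  -- Step 1 : truncated-moment bound
  have hTle : ∀ x : ℝ, 1 ≤ x → T x ≤ M * x ^ (1 - p) := by
    intro x hx1
    have hx0 : (0:ℝ) < x := by linarith
    set sset := {ω | x < |Y ω|} with hsset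
    have hsm : MeasurableSet sset := measurableSet_lt measurable_const hYmeas.abs
    have hbd : ∀ ω ∈ sset, |Y ω| ≤ x ^ (1 - p) * |Y ω| ^ p := by
      intro ω hω
      have ha : x < |Y ω| := hω
      have hY0 : (0:ℝ) < |Y ω| := hx0.trans ha
      have e1 : x ^ (1-p) * x ^ (p-1) = 1 := by
        rw [← Real.rpow_add hx0, show (1-p)+(p-1) = 0 by ring, Real.rpow_zero]
      have e2 : |Y ω| ^ (1:ℝ) * |Y ω| ^ (p-1) = |Y ω| ^ p := by
        rw [← Real.rpow_add hY0]; ring_nf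
      have e3 : x ^ (p-1) ≤ |Y ω| ^ (p-1) := Real.rpow_le_rpow hx0.le ha.le (by linarith)
      have e4 : (0:ℝ) < x ^ (1-p) := Real.rpow_pos_of_pos hx0 _
      calc |Y ω| = |Y ω| * (x^(1-p) * x^(p-1)) := by rw [e1, mul_one]
        _ = (x^(1-p) * |Y ω|) * x^(p-1) := by ring
        _ ≤ (x^(1-p) * |Y ω|) * |Y ω|^(p-1) :=
            mul_le_mul_of_nonneg_left e3 (mul_nonneg e4.le hY0.le)
        _ = x^(1-p) * (|Y ω| ^ (1:ℝ) * |Y ω|^(p-1)) := by rw [Real.rpow_one]; ring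
        _ = x^(1-p) * |Y ω|^p := by rw [e2]
    have hmomOn : IntegrableOn (fun ω => x^(1-p) * |Y ω|^p) sset μ :=
      (hmom.integrableOn).const_mul _
    have hYon : IntegrableOn (fun ω => |Y ω|) sset μ := by
      refine Integrable.mono' hmomOn (hYmeas.abs.aestronglyMeasurable.restrict) ?_
      rw [ae_restrict_iff' hsm]
      exact ae_of_all _ (fun ω hω => by
        rw [Real.norm_eq_abs, abs_abs]; exact hbd ω hω)
    calc T x ≤ ∫ ω in sset, x^(1-p) * |Y ω|^p ∂μ := setIntegral_mono_on hYon hmomOn hsm hbd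
      _ = x^(1-p) * ∫ ω in sset, |Y ω|^p ∂μ := integral_const_mul _ _
      _ ≤ x^(1-p) * M := by
          have hle := setIntegral_le_integral (s := sset) hmom
            (ae_of_all _ fun ω => Real.rpow_nonneg (abs_nonneg _) _)
          exact mul_le_mul_of_nonneg_left hle (Real.rpow_nonneg hx0.le _)
      _ = M * x^(1-p) := mul_comm _ _
  -- Step 2 : inner integral bound
  have hinner : ∀ A : ℝ, 1 ≤ A →
      (∫ x in Set.Ioi A, x^(-r) * T x ^ r) ≤ M^r * (A^(1-p*r)/(p*r-1)) := by
    intro A hA1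
    have hA0 : (0:ℝ) < A := by linarith
    have hexp : -(p*r) < -1 := by nlinarith
    have hgint : IntegrableOn (fun x => M^r * x^(-(p*r))) (Set.Ioi A) :=
      (integrableOn_Ioi_rpow_of_lt hexp hA0).const_mul _
    have hb : ∀ x ∈ Set.Ioi A, x^(-r) * T x ^ r ≤ M^r * x^(-(p*r)) := by
      intro x hx
      have hx1 : (1:ℝ) ≤ x := hA1.trans (le_of_lt hx)
      have hx0 : (0:ℝ) < x := by linarith
      have h1 : T x ^ r ≤ (M * x^(1-p))^r :=
        Real.rpow_le_rpow (hT0 x) (hTle x hx1) hr0.le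
      have h2 : (M * x^(1-p))^r = M^r * x^((1-p)*r) := by
        rw [Real.mul_rpow hM0 (Real.rpow_nonneg hx0.le _), ← Real.rpow_mul hx0.le]
      calc x^(-r) * T x ^ r ≤ x^(-r) * (M^r * x^((1-p)*r)) := by
            rw [← h2]; exact mul_le_mul_of_nonneg_left h1 (Real.rpow_nonneg hx0.le _)
        _ = M^r * (x^(-r) * x^((1-p)*r)) := by ring
        _ = M^r * x^(-(p*r)) := by
            rw [← Real.rpow_add hx0, show -r + (1-p)*r = -(p*r) by ring]
    have hf0 : 0 ≤ᵐ[volume.restrict (Set.Ioi A)] fun x => x^(-r) * T x ^ r := by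
      rw [EventuallyLE, ae_restrict_iff' measurableSet_Ioi]
      exact ae_of_all _ fun x hx =>
        mul_nonneg (Real.rpow_nonneg (le_of_lt (hA0.trans hx)) _)
          (Real.rpow_nonneg (hT0 x) _)
    have hfg : (fun x => x^(-r) * T x ^ r) ≤ᵐ[volume.restrict (Set.Ioi A)]
        fun x => M^r * x^(-(p*r)) := by
      rw [EventuallyLE, ae_restrict_iff' measurableSet_Ioi]
      exact ae_of_all _ hb
    refine le_trans (integral_mono_of_nonneg hf0 hgint hfg) ?_
    rw [integral_const_mul, integral_Ioi_rpow_of_lt hexp hA0,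
      show -(p*r)+1 = 1-p*r by ring]
    have heq : -A^(1-p*r)/(1-p*r) = A^(1-p*r)/(p*r-1) := by
      rw [div_eq_div_iff (by nlinarith) (by nlinarith)]; ring
    rw [heq]
  -- Step 3 : assemble
  set ε₀ : ℝ := (r-1)*(p/s-1)/2 with hε₀def
  have hε₀ : 0 < ε₀ := by
    have : 0 < (r-1)*(p/s-1) := mul_pos (by linarith) (by linarith)
    linarith
  obtain ⟨C, hC0, X, hX1, hXbd⟩ := slow_growth l hlmeas hlpos hlslow hε₀
  set K : ℝ := C * (M^r / (p*r-1)) with hKdef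
  have hnb : ∀ n : ℕ, X ≤ (n:ℝ)+1 →
      ((n + 1 : ℝ) ^ (r + p / s - 2 - 1 / s)) * l (n + 1) *
        (∫ x in Set.Ioi ((n + 1 : ℝ) ^ (1 / s)), x ^ (-r) * T x ^ r)
      ≤ K * ((n:ℝ)+1)^(-1-ε₀) := by
    intro n hXn
    set m : ℝ := (n:ℝ)+1 with hmdef
    have hm1 : (1:ℝ) ≤ m := by
      have := Nat.cast_nonneg (α := ℝ) n; rw [hmdef]; linarith
    have hm0 : (0:ℝ) < m := by linarith
    have hA1 : (1:ℝ) ≤ m ^ (1/s) := Real.one_le_rpow hm1 (by positivity)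
    have hI := hinner (m^(1/s)) hA1
    have hl := hXbd m hXn
    have hfac : 0 ≤ m ^ (r + p/s - 2 - 1/s) := Real.rpow_nonneg hm0.le _
    have hJ0 : 0 ≤ M^r * ((m^(1/s))^(1-p*r)/(p*r-1)) := by
      apply mul_nonneg (Real.rpow_nonneg hM0 _)
      apply div_nonneg (Real.rpow_nonneg (Real.rpow_nonneg hm0.le _) _) (by linarith)
    calc m ^ (r + p/s - 2 - 1/s) * l m * (∫ x in Set.Ioi (m^(1/s)), x^(-r) * T x ^ r)
        ≤ m ^ (r + p/s - 2 - 1/s) * l m * (M^r * ((m^(1/s))^(1-p*r)/(p*r-1))) := by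
          apply mul_le_mul_of_nonneg_left hI
          exact mul_nonneg hfac (hlpos m (by linarith)).le
      _ ≤ m ^ (r + p/s - 2 - 1/s) * (C * m^ε₀) * (M^r * ((m^(1/s))^(1-p*r)/(p*r-1))) := by
          apply mul_le_mul_of_nonneg_right _ hJ0
          exact mul_le_mul_of_nonneg_left hl hfac
      _ = K * m^(-1-ε₀) := by
          have hsne : s ≠ 0 := ne_of_gt hs0
          have hexpeq : r + p/s - 2 - 1/s + ε₀ + (1/s)*(1-p*r) = -1 - ε₀ := by
            rw [hε₀def]; field_simp; ring
          rw [hKdef, ← Real.rpow_mul hm0.le,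
            show m ^ (r + p/s - 2 - 1/s) * (C * m^ε₀) * (M^r * (m^((1/s)*(1-p*r))/(p*r-1)))
              = C * (M^r/(p*r-1)) * (m ^ (r + p/s - 2 - 1/s) * m^ε₀ * m^((1/s)*(1-p*r)))
              by ring,
            ← Real.rpow_add hm0, ← Real.rpow_add hm0, hexpeq]
  have ha0 : ∀ n : ℕ, 0 ≤ ((n + 1 : ℝ) ^ (r + p / s - 2 - 1 / s)) * l (n + 1) *
      (∫ x in Set.Ioi ((n + 1 : ℝ) ^ (1 / s)), x ^ (-r) * T x ^ r) := by
    intro n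
    have hm0 : (0:ℝ) < (n:ℝ)+1 := by positivity
    apply mul_nonneg (mul_nonneg (Real.rpow_nonneg hm0.le _) (hlpos _ hm0.le).le)
    apply setIntegral_nonneg measurableSet_Ioi
    intro x hx
    have hx0 : (0:ℝ) < x := lt_trans (Real.rpow_pos_of_pos hm0 _) hx
    exact mul_nonneg (Real.rpow_nonneg hx0.le _) (Real.rpow_nonneg (hT0 x) _)
  have hq : (-1 - ε₀) < -1 := by linarith
  have hsum0 : Summable (fun n : ℕ => ((n:ℝ))^(-1-ε₀)) := Real.summable_nat_rpow.mpr hq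
  have hsum1 : Summable (fun n : ℕ => K * ((n:ℝ)+1)^(-1-ε₀)) := by
    have h1 := (summable_nat_add_iff (f := fun n : ℕ => ((n:ℝ))^(-1-ε₀)) 1).mpr hsum0
    refine ((h1.mul_left K).congr fun n => ?_)
    push_cast
    ring_nf
  set N : ℕ := ⌈X⌉₊ with hN
  apply (summable_nat_add_iff N).mp
  refine Summable.of_nonneg_of_le (fun n => ha0 (n+N)) (fun n => ?_)
    ((summable_nat_add_iff (f := fun n : ℕ => K * ((n:ℝ)+1)^(-1-ε₀)) N).mpr hsum1)
  refine hnb (n+N) ?_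
  have h1 : X ≤ (N:ℝ) := Nat.le_ceil X
  push_cast
  linarith [Nat.cast_nonneg (α := ℝ) n]
end
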